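/- Let G be a connected undirected simple graph on the vertex set {1,…,m} with m ≥ 2 and Laplacian matrix L ∈ ℝ^{m×m}, let X ∈ ℝ^{n×d} have column blocks X_j ∈ ℝ^{n×d_j} (d = Σ_{j=1}^m d_j), and let θ ∈ ℝ^d be partitioned accordingly as θ = (θ₁;…;θ_m). Then there exists a matrix V ∈ ℝ^{n×m} such that V L e_j = −X_j θ_j for every j ∈ {2,…,m}, V L e₁ = Σ_{j=2}^m X_j θ_j, and ‖V‖_F² ≤ 2·‖L†‖²·‖X‖²·‖θ‖₂². -/

import Mathlib

open Matrix Finset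

/-- The ℓ₂→ℓ₂ operator norm (largest singular value) of a real matrix. -/
noncomputable def opNorm {α β : Type*} [Fintype α] [Fintype β] [DecidableEq β]
    (M : Matrix α β ℝ) : ℝ :=
  ‖LinearMap.toContinuousLinearMap (Matrix.toEuclideanLin M)‖

/-- `P` satisfies the four Moore–Penrose conditions for `M`. -/
def IsMoorePenrose {α β : Type*} [Fintype α] [Fintype β]
    (M : Matrix α β ℝ) (P : Matrix β α ℝ) : Prop :=
  M * P * M = M ∧ P * M * P = P ∧ (M * P)ᵀ = M * P ∧ (P * M)ᵀ = P * M

open Classical in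
/-- The Moore–Penrose pseudoinverse. -/
noncomputable def pinv {α β : Type*} [Fintype α] [Fintype β]
    (M : Matrix α β ℝ) : Matrix β α ℝ :=
  if h : ∃ P, IsMoorePenrose M P then h.choose else 0

/-- For a connected graph `G` on `{1,…,m}` (`m ≥ 2`, the first agent has index `0`),
design blocks `X_j` and a block vector `θ`, there is `V ∈ ℝ^{n×m}` with
`V L e_j = −X_j θ_j` for `j ≥ 2`, `V L e₁ = Σ_{j=2}^m X_j θ_j`, and
`‖V‖_F² ≤ 2‖L†‖²‖X‖²‖θ‖₂²`. -/

lemma aux_opNorm_nonneg {α β : Type*} [Fintype α] [Fintype β] [DecidableEq β]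
    (M : Matrix α β ℝ) : 0 ≤ opNorm M := norm_nonneg _

lemma aux_sum_sq_mulVec_le {α β : Type*} [Fintype α] [Fintype β] [DecidableEq β]
    (M : Matrix α β ℝ) (x : β → ℝ) :
    ∑ i, (M.mulVec x i) ^ 2 ≤ opNorm M ^ 2 * ∑ j, (x j) ^ 2 := by
  have h := (LinearMap.toContinuousLinearMap (Matrix.toEuclideanLin M)).le_opNorm
      ((WithLp.equiv 2 (β → ℝ)).symm x)
  rw [LinearMap.coe_toContinuousLinearMap'] at h
  rw [show (Matrix.toEuclideanLin M) ((WithLp.equiv 2 (β → ℝ)).symm x) = (WithLp.equiv 2 (α → ℝ)).symm (M.mulVec x) from rfl] at h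
  have hA : ‖(WithLp.equiv 2 (α → ℝ)).symm (M.mulVec x)‖ = Real.sqrt (∑ i, (M.mulVec x i) ^ 2) := by
    rw [EuclideanSpace.norm_eq]
    congr 1
    refine Finset.sum_congr rfl fun i _ => ?_
    simp [Real.norm_eq_abs, sq_abs]
  have hB : ‖(WithLp.equiv 2 (β → ℝ)).symm x‖ = Real.sqrt (∑ j, (x j) ^ 2) := by
    rw [EuclideanSpace.norm_eq]
    congr 1
    refine Finset.sum_congr rfl fun i _ => ?_
    simp [Real.norm_eq_abs, sq_abs]
  rw [hA, hB] at h
  have h1 : (0:ℝ) ≤ ∑ i, (M.mulVec x i) ^ 2 := Finset.sum_nonneg fun _ _ => sq_nonneg _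
  have h2 : (0:ℝ) ≤ ∑ j, (x j) ^ 2 := Finset.sum_nonneg fun _ _ => sq_nonneg _
  calc ∑ i, (M.mulVec x i) ^ 2 = (Real.sqrt (∑ i, (M.mulVec x i) ^ 2)) ^ 2 := by
        rw [Real.sq_sqrt h1]
    _ ≤ (opNorm M * Real.sqrt (∑ j, (x j) ^ 2)) ^ 2 := by
        apply pow_le_pow_left₀ (Real.sqrt_nonneg _) h
    _ = opNorm M ^ 2 * ∑ j, (x j) ^ 2 := by
        rw [mul_pow, Real.sq_sqrt h2]

lemma aux_opNorm_transpose {α β : Type*} [Fintype α] [Fintype β] [DecidableEq α] [DecidableEq β]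
    (M : Matrix α β ℝ) : opNorm Mᵀ = opNorm M := by
  have h : Mᵀ = Mᴴ := (Matrix.conjTranspose_eq_transpose_of_trivial M).symm
  rw [opNorm, h, Matrix.toEuclideanLin_conjTranspose_eq_adjoint,
    LinearMap.adjoint_toContinuousLinearMap]
  exact (ContinuousLinearMap.adjoint : _ ≃ₗᵢ⋆[ℝ] _).norm_map _

lemma aux_sandwich {α : Type*} [Fintype α] [DecidableEq α] (U : Matrix α α ℝ) (c : α → ℝ) :
    (U * Matrix.diagonal c * Uᴴ)ᵀ = U * Matrix.diagonal c * Uᴴ := by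
  rw [Matrix.conjTranspose_eq_transpose_of_trivial]
  simp [Matrix.transpose_mul, Matrix.mul_assoc]

lemma aux_exists_mp {α : Type*} [Fintype α] [DecidableEq α]
    (A : Matrix α α ℝ) (hA : A.IsHermitian) : ∃ P, IsMoorePenrose A P := by
  classical
  set U : Matrix α α ℝ := (Matrix.IsHermitian.eigenvectorUnitary hA : Matrix α α ℝ) with hU
  set ev : α → ℝ := hA.eigenvalues with hev
  have hspec : A = U * Matrix.diagonal ev * Uᴴ := by
    have := hA.spectral_theorem
    simpa [hU, hev, Function.comp, Matrix.star_eq_conjTranspose] using this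
  have h1 : Uᴴ * U = 1 := by
    rw [← Matrix.star_eq_conjTranspose]
    exact Matrix.mem_unitaryGroup_iff'.mp (Matrix.IsHermitian.eigenvectorUnitary hA).2
  have key : ∀ c c' : α → ℝ, (U * diagonal c * Uᴴ) * (U * diagonal c' * Uᴴ)
      = U * diagonal (fun i => c i * c' i) * Uᴴ := by
    intro c c'
    calc U * diagonal c * Uᴴ * (U * diagonal c' * Uᴴ)
        = U * (diagonal c * (Uᴴ * U) * diagonal c') * Uᴴ := by
          simp only [Matrix.mul_assoc]
      _ = U * diagonal (fun i => c i * c' i) * Uᴴ := by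
          rw [h1, Matrix.mul_one, Matrix.diagonal_mul_diagonal]
  refine ⟨U * Matrix.diagonal (fun i => (ev i)⁻¹) * Uᴴ, ?_, ?_, ?_, ?_⟩
  all_goals rw [hspec]
  · rw [key, key]
    have : (fun i => ev i * (ev i)⁻¹ * ev i) = ev := by
      funext i
      rcases eq_or_ne (ev i) 0 with h | h
      · simp [h]
      · field_simp
    rw [this]
  · rw [key, key]
    have : (fun i => (ev i)⁻¹ * ev i * (ev i)⁻¹) = fun i => (ev i)⁻¹ := by
      funext i
      rcases eq_or_ne (ev i) 0 with h | h
      · simp [h]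
      · field_simp
    rw [this]
  · rw [key]; exact aux_sandwich U _
  · rw [key]; exact aux_sandwich U _

lemma aux_lap_range {m : ℕ} [NeZero m] (G : SimpleGraph (Fin m)) [DecidableRel G.Adj]
    (hG : G.Connected) (x : Fin m → ℝ) (hx : ∑ i, x i = 0) :
    ∃ z, (G.lapMatrix ℝ).mulVec z = x := by
  classical
  set T := Matrix.toLin' (G.lapMatrix ℝ) with hT
  -- kernel has finrank 1
  have hcard : Fintype.card G.ConnectedComponent = 1 := by
    rw [Fintype.card_eq_one_iff]
    refine ⟨G.connectedComponentMk 0, ?_⟩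
    intro c
    induction c using SimpleGraph.ConnectedComponent.ind with
    | _ v => exact SimpleGraph.ConnectedComponent.sound (hG.preconnected v 0)
  have hker : Module.finrank ℝ (LinearMap.ker T) = 1 := by
    rw [← SimpleGraph.card_connectedComponent_eq_finrank_ker_toLin'_lapMatrix, hcard]
  -- sum functional
  let φ : (Fin m → ℝ) →ₗ[ℝ] ℝ := ∑ i, LinearMap.proj i
  have hφ : ∀ y : Fin m → ℝ, φ y = ∑ i, y i := by
    intro y; simp [φ]
  have hφsurj : Function.Surjective φ := by
    intro c
    refine ⟨Pi.single 0 c, ?_⟩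
    rw [hφ]
    simp
  have hkerφ : Module.finrank ℝ (LinearMap.ker φ) = m - 1 := by
    have h := LinearMap.finrank_range_add_finrank_ker φ
    rw [LinearMap.range_eq_top.mpr hφsurj] at h
    simp only [finrank_top, Module.finrank_self, Module.finrank_pi, Fintype.card_fin] at h
    omega
  -- range T ≤ ker φ
  have hcol : ∀ j, ∑ i, G.lapMatrix ℝ i j = 0 := by
    intro j
    have h1 := congrFun (SimpleGraph.lapMatrix_mulVec_const_eq_zero (R := ℝ) (G := G)) j
    simp only [Matrix.mulVec, dotProduct, mul_one, Pi.zero_apply] at h1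
    rw [← h1]
    refine Finset.sum_congr rfl fun i _ => ?_
    exact congrFun (congrFun (SimpleGraph.isSymm_lapMatrix G (R := ℝ)) j) i |>.symm ▸ rfl
  have hle : LinearMap.range T ≤ LinearMap.ker φ := by
    rintro y ⟨z, rfl⟩
    rw [LinearMap.mem_ker, hφ, hT]
    simp only [Matrix.toLin'_apply, Matrix.mulVec, dotProduct]
    rw [Finset.sum_comm]
    rw [show (0:ℝ) = ∑ j, (∑ i, G.lapMatrix ℝ i j) * z j by simp [hcol]]
    refine Finset.sum_congr rfl fun j _ => ?_
    rw [Finset.sum_mul]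
  have hfr : Module.finrank ℝ (LinearMap.range T) = m - 1 := by
    have h := LinearMap.finrank_range_add_finrank_ker T
    rw [hker] at h
    simp only [Module.finrank_pi, Fintype.card_fin] at h
    omega
  have heq : LinearMap.range T = LinearMap.ker φ :=
    Submodule.eq_of_le_of_finrank_eq hle (by rw [hfr, hkerφ])
  have hx' : x ∈ LinearMap.range T := by
    rw [heq, LinearMap.mem_ker, hφ]; exact hx
  obtain ⟨z, hz⟩ := hx'
  exact ⟨z, by rw [← Matrix.toLin'_apply (G.lapMatrix ℝ) z, ← hT, hz]⟩

theorem stmt_7 {m n : ℕ} [NeZero m] (hm : 2 ≤ m)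
    (G : SimpleGraph (Fin m)) [DecidableRel G.Adj] (hG : G.Connected)
    (d : Fin m → ℕ) (Xb : ∀ j, Matrix (Fin n) (Fin (d j)) ℝ)
    (X : Matrix (Fin n) ((j : Fin m) × Fin (d j)) ℝ)
    (hX : ∀ i j k, X i ⟨j, k⟩ = Xb j i k)
    (θ : ∀ j, Fin (d j) → ℝ) :
    ∃ V : Matrix (Fin n) (Fin m) ℝ,
      (∀ j : Fin m, j ≠ 0 → ∀ i, (V * G.lapMatrix ℝ) i j = -((Xb j).mulVec (θ j) i)) ∧
      (∀ i, (V * G.lapMatrix ℝ) i 0 = ∑ j ∈ Finset.univ.erase 0, (Xb j).mulVec (θ j) i) ∧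
      (∑ i, ∑ j, (V i j) ^ 2) ≤
        2 * opNorm (pinv (G.lapMatrix ℝ)) ^ 2 * opNorm X ^ 2 * (∑ j, ∑ k, (θ j k) ^ 2) := by
  classical
  set L := G.lapMatrix ℝ with hLdef
  have hLsymm : Lᵀ = L := SimpleGraph.isSymm_lapMatrix (G := G) (R := ℝ)
  have hherm : L.IsHermitian := by
    rw [Matrix.IsHermitian, Matrix.conjTranspose_eq_transpose_of_trivial]; exact hLsymm
  have hex : ∃ P', IsMoorePenrose L P' := aux_exists_mp L hherm
  have hpinv : pinv L = hex.choose := by rw [pinv, dif_pos hex]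
  have hP : IsMoorePenrose L (pinv L) := by rw [hpinv]; exact hex.choose_spec
  set P := pinv L with hPdef
  obtain ⟨h1, h2, h3, h4⟩ := hP
  -- P * L * L = L
  have e1 : L * Pᵀ * L = L := by
    have e2 : (L * Pᵀ * L)ᵀ = L := by
      rw [Matrix.transpose_mul, Matrix.transpose_mul, Matrix.transpose_transpose, hLsymm,
        ← Matrix.mul_assoc, h1]
    calc L * Pᵀ * L = ((L * Pᵀ * L)ᵀ)ᵀ := by rw [Matrix.transpose_transpose]
      _ = Lᵀ := by rw [e2]
      _ = L := hLsymm
  have h5 : P * L * L = L := by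
    calc P * L * L = (P * L)ᵀ * L := by rw [h4]
      _ = Lᵀ * Pᵀ * L := by rw [Matrix.transpose_mul]
      _ = L * Pᵀ * L := by rw [hLsymm]
      _ = L := e1
  -- the target matrix B
  set s : Fin n → ℝ := fun i => ∑ j ∈ Finset.univ.erase 0, (Xb j).mulVec (θ j) i with hs
  set B : Matrix (Fin n) (Fin m) ℝ :=
    Matrix.of fun i j => if j = 0 then s i else -((Xb j).mulVec (θ j) i) with hB
  have hBsum : ∀ i, ∑ j, B i j = 0 := by
    intro i
    rw [← Finset.add_sum_erase Finset.univ _ (Finset.mem_univ 0)]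
    have hb0 : B i 0 = s i := by simp [hB]
    have hrest : ∑ j ∈ Finset.univ.erase 0, B i j = -s i := by
      rw [hs, ← Finset.sum_neg_distrib]
      refine Finset.sum_congr rfl fun j hj => ?_
      have hj0 : j ≠ 0 := (Finset.mem_erase.mp hj).1
      simp [hB, hj0]
    rw [hb0, hrest, add_neg_cancel]
  -- Q := P * L fixes every vector with zero sum
  have hQfix : ∀ x : Fin m → ℝ, (∑ j, x j) = 0 → (P * L).mulVec x = x := by
    intro x hx
    obtain ⟨z, hz⟩ := aux_lap_range G hG x hx
    rw [← hz, Matrix.mulVec_mulVec, h5]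
  have hBQ : B * (P * L) = B := by
    ext i j
    have hrow := congrFun (hQfix (B i) (hBsum i)) j
    simp only [Matrix.mulVec, dotProduct] at hrow
    rw [Matrix.mul_apply, ← hrow]
    refine Finset.sum_congr rfl fun k _ => ?_
    rw [mul_comm]
    congr 1
    have := congrFun (congrFun h4 k) j
    simpa [Matrix.transpose_apply] using this.symm
  refine ⟨B * P, ?_, ?_, ?_⟩
  · intro j hj i
    rw [Matrix.mul_assoc, hBQ]
    simp [hB, hj]
  · intro i
    rw [Matrix.mul_assoc, hBQ]
    simp [hB, hs]
  · -- Frobenius norm bound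
    set Θ : ℝ := ∑ j, ∑ k, (θ j k) ^ 2 with hΘ
    have hXop : (0:ℝ) ≤ opNorm X ^ 2 := sq_nonneg _
    have hPop : (0:ℝ) ≤ opNorm P ^ 2 := sq_nonneg _
    -- rows of V
    have hrowV : ∀ i j, (B * P) i j = Pᵀ.mulVec (B i) j := by
      intro i j
      rw [Matrix.mul_apply]
      simp only [Matrix.mulVec, dotProduct, Matrix.transpose_apply]
      exact Finset.sum_congr rfl fun k _ => mul_comm _ _
    have hFrow : ∀ i, ∑ j, ((B * P) i j) ^ 2 ≤ opNorm P ^ 2 * ∑ j, (B i j) ^ 2 := by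
      intro i
      calc ∑ j, ((B * P) i j) ^ 2 = ∑ j, (Pᵀ.mulVec (B i) j) ^ 2 :=
            Finset.sum_congr rfl fun j _ => by rw [hrowV]
        _ ≤ opNorm Pᵀ ^ 2 * ∑ j, (B i j) ^ 2 := aux_sum_sq_mulVec_le Pᵀ (B i)
        _ = opNorm P ^ 2 * ∑ j, (B i j) ^ 2 := by rw [aux_opNorm_transpose]
    have hBrow : ∀ i, ∑ j, (B i j) ^ 2
        = (s i) ^ 2 + ∑ j ∈ Finset.univ.erase 0, ((Xb j).mulVec (θ j) i) ^ 2 := by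
      intro i
      rw [← Finset.add_sum_erase Finset.univ (fun j => (B i j) ^ 2) (Finset.mem_univ 0)]
      have hb0 : B i 0 ^ 2 = s i ^ 2 := by simp [hB]
      have hrest : ∑ j ∈ Finset.univ.erase 0, (B i j) ^ 2
          = ∑ j ∈ Finset.univ.erase 0, ((Xb j).mulVec (θ j) i) ^ 2 := by
        refine Finset.sum_congr rfl fun j hj => ?_
        have hj0 : j ≠ 0 := (Finset.mem_erase.mp hj).1
        simp [hB, hj0]
      rw [hb0, hrest]
    -- S1 bound
    have hsig : (Finset.univ : Finset ((j : Fin m) × Fin (d j)))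
        = Finset.univ.sigma (fun _ => Finset.univ) := Finset.univ_sigma_univ.symm
    set θt : ((j : Fin m) × Fin (d j)) → ℝ := fun σ => if σ.1 = 0 then 0 else θ σ.1 σ.2 with hθt
    have hXθt : ∀ i, X.mulVec θt i = s i := by
      intro i
      simp only [Matrix.mulVec, dotProduct]
      rw [hsig, Finset.sum_sigma]
      rw [← Finset.add_sum_erase Finset.univ
        (fun j => ∑ k, X i ⟨j, k⟩ * θt ⟨j, k⟩) (Finset.mem_univ 0)]
      have hz : ∑ k, X i ⟨0, k⟩ * θt ⟨0, k⟩ = 0 := by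
        simp [hθt]
      rw [hz, zero_add, hs]
      refine Finset.sum_congr rfl fun j hj => ?_
      have hj0 : j ≠ 0 := (Finset.mem_erase.mp hj).1
      simp only [Matrix.mulVec, dotProduct]
      refine Finset.sum_congr rfl fun k _ => ?_
      rw [hX, hθt]
      simp [hj0]
    have hθtΘ : ∑ σ, (θt σ) ^ 2 ≤ Θ := by
      have : Θ = ∑ σ : (j : Fin m) × Fin (d j), (θ σ.1 σ.2) ^ 2 := by
        rw [hΘ, hsig, Finset.sum_sigma]
      rw [this]
      refine Finset.sum_le_sum fun σ _ => ?_
      rw [hθt]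
      rcases eq_or_ne σ.1 0 with h | h
      · simp [h, sq_nonneg]
      · simp [h]
    have hS1 : ∑ i, (s i) ^ 2 ≤ opNorm X ^ 2 * Θ := by
      calc ∑ i, (s i) ^ 2 = ∑ i, (X.mulVec θt i) ^ 2 :=
            Finset.sum_congr rfl fun i _ => by rw [hXθt]
        _ ≤ opNorm X ^ 2 * ∑ σ, (θt σ) ^ 2 := aux_sum_sq_mulVec_le X θt
        _ ≤ opNorm X ^ 2 * Θ := by
            exact mul_le_mul_of_nonneg_left hθtΘ hXop
    -- S2 bound
    have hS2 : ∀ j0 : Fin m, ∑ i, ((Xb j0).mulVec (θ j0) i) ^ 2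
        ≤ opNorm X ^ 2 * ∑ k, (θ j0 k) ^ 2 := by
      intro j0
      set θh : ((j : Fin m) × Fin (d j)) → ℝ :=
        fun σ => if σ.1 = j0 then θ σ.1 σ.2 else 0 with hθh
      have hXθh : ∀ i, X.mulVec θh i = (Xb j0).mulVec (θ j0) i := by
        intro i
        simp only [Matrix.mulVec, dotProduct]
        rw [hsig, Finset.sum_sigma]
        have : ∀ j : Fin m, ∑ k, X i ⟨j, k⟩ * θh ⟨j, k⟩
            = if j = j0 then ∑ k, Xb j0 i k * θ j0 k else 0 := by
          intro j
          rcases eq_or_ne j j0 with h | h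
          · subst h
            simp only [if_pos rfl]
            refine Finset.sum_congr rfl fun k _ => ?_
            rw [hX, hθh]
            simp
          · simp [hθh, h]
        rw [Finset.sum_congr rfl fun j _ => this j, Finset.sum_ite_eq' Finset.univ j0]
        simp
      have hθhsum : ∑ σ, (θh σ) ^ 2 = ∑ k, (θ j0 k) ^ 2 := by
        rw [hsig, Finset.sum_sigma]
        have : ∀ j : Fin m, ∑ k : Fin (d j), (θh ⟨j, k⟩) ^ 2
            = if j = j0 then ∑ k, (θ j0 k) ^ 2 else 0 := by
          intro j
          rcases eq_or_ne j j0 with h | h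
          · subst h; simp [hθh]
          · simp [hθh, h]
        rw [Finset.sum_congr rfl fun j _ => this j, Finset.sum_ite_eq' Finset.univ j0]
        simp
      calc ∑ i, ((Xb j0).mulVec (θ j0) i) ^ 2 = ∑ i, (X.mulVec θh i) ^ 2 :=
            Finset.sum_congr rfl fun i _ => by rw [hXθh]
        _ ≤ opNorm X ^ 2 * ∑ σ, (θh σ) ^ 2 := aux_sum_sq_mulVec_le X θh
        _ = opNorm X ^ 2 * ∑ k, (θ j0 k) ^ 2 := by rw [hθhsum]
    have hS2' : ∑ i, ∑ j ∈ Finset.univ.erase 0, ((Xb j).mulVec (θ j) i) ^ 2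
        ≤ opNorm X ^ 2 * Θ := by
      rw [Finset.sum_comm]
      calc ∑ j ∈ Finset.univ.erase 0, ∑ i, ((Xb j).mulVec (θ j) i) ^ 2
          ≤ ∑ j ∈ Finset.univ.erase 0, opNorm X ^ 2 * ∑ k, (θ j k) ^ 2 :=
            Finset.sum_le_sum fun j _ => hS2 j
        _ = opNorm X ^ 2 * ∑ j ∈ Finset.univ.erase 0, ∑ k, (θ j k) ^ 2 := by
            rw [Finset.mul_sum]
        _ ≤ opNorm X ^ 2 * Θ := by
            refine mul_le_mul_of_nonneg_left ?_ hXop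
            rw [hΘ]
            refine Finset.sum_le_sum_of_subset_of_nonneg (Finset.subset_univ _) ?_
            intro j _ _
            exact Finset.sum_nonneg fun k _ => sq_nonneg _
    calc ∑ i, ∑ j, ((B * P) i j) ^ 2
        ≤ ∑ i, opNorm P ^ 2 * ∑ j, (B i j) ^ 2 := Finset.sum_le_sum fun i _ => hFrow i
      _ = opNorm P ^ 2 * ∑ i, ∑ j, (B i j) ^ 2 := by rw [Finset.mul_sum]
      _ = opNorm P ^ 2 * ((∑ i, (s i) ^ 2)
            + ∑ i, ∑ j ∈ Finset.univ.erase 0, ((Xb j).mulVec (θ j) i) ^ 2) := by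
          rw [← Finset.sum_add_distrib]
          congr 1
          exact Finset.sum_congr rfl fun i _ => hBrow i
      _ ≤ opNorm P ^ 2 * (opNorm X ^ 2 * Θ + opNorm X ^ 2 * Θ) :=
          mul_le_mul_of_nonneg_left (add_le_add hS1 hS2') hPop
      _ = 2 * opNorm P ^ 2 * opNorm X ^ 2 * Θ := by ring
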